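/- For a finite subgroup Γ of SL_4(ℂ) with natural representation γ of character χ, the diagonal entries of T_Γ⁻¹ A^(1) T_Γ, T_Γ⁻¹ A^(2) T_Γ, T_Γ⁻¹ A^(3) T_Γ are respectively conj(χ(g_j)), (χ(g_j)² − χ(g_j²))/2, and χ(g_j). -/

import Mathlib

set_option maxHeartbeats 1000000


open Matrix Finset

private lemma geom_aux {n : ℕ} (x : ℂ) (hx : x ^ n = 1) :
    ∑ m ∈ Finset.range n, x ^ m = if x = 1 then (n : ℂ) else 0 := by
  split_ifs with h
  · simp [h]
  · rw [geom_sum_eq h n, hx, sub_self, zero_div]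

private lemma shift_aux {n : ℕ} {M : Type*} [AddCommGroup M] (G : ℕ → M) (hG : G n = G 0) :
    ∑ m ∈ Finset.range n, G (m + 1) = ∑ m ∈ Finset.range n, G m := by
  have h1 : ∑ m ∈ Finset.range (n + 1), G m
      = (∑ m ∈ Finset.range n, G (m + 1)) + G 0 := Finset.sum_range_succ' G n
  have h2 : ∑ m ∈ Finset.range (n + 1), G m
      = (∑ m ∈ Finset.range n, G m) + G n := Finset.sum_range_succ G n
  rw [h1, hG] at h2
  exact add_right_cancel h2

private lemma exists_diag {n : ℕ} (hn : 0 < n) (A : Matrix (Fin 4) (Fin 4) ℂ)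
    (hA : A ^ n = 1) :
    ∃ d : Fin 4 → ℂ, (∀ i, d i ^ n = 1) ∧ (∀ m : ℕ, (A ^ m).trace = ∑ i, d i ^ m) ∧
      A.det = ∏ i, d i := by
  classical
  set V := (Fin 4 → ℂ) with hV
  let f : Module.End ℂ V := Matrix.toLinAlgEquiv' A
  have hfn : f ^ n = 1 := by
    show (Matrix.toLinAlgEquiv' A : Module.End ℂ V) ^ n = 1
    rw [← map_pow, hA, _root_.map_one]
  let u : ℂ := Complex.exp (2 * Real.pi * Complex.I / n)
  have hprim : IsPrimitiveRoot u n := Complex.isPrimitiveRoot_exp n hn.ne'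
  have hun : u ^ n = 1 := hprim.pow_eq_one
  let lam : Fin n → ℂ := fun k => u ^ (k : ℕ)
  have hlam_pow : ∀ k, lam k ^ n = 1 := by
    intro k
    show (u ^ (k : ℕ)) ^ n = 1
    rw [← pow_mul, mul_comm, pow_mul, hun, one_pow]
  have hlam_ne : ∀ k, lam k ≠ 0 := by
    intro k h
    have := hlam_pow k
    rw [h, zero_pow hn.ne'] at this
    exact one_ne_zero this.symm
  have hlaminv_pow : ∀ k, (lam k)⁻¹ ^ n = 1 := by
    intro k; rw [inv_pow, hlam_pow, inv_one]
  have hlaminv : ∀ k, lam k * (lam k)⁻¹ = 1 := fun k => mul_inv_cancel₀ (hlam_ne k)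
  let P : Fin n → Module.End ℂ V :=
    fun k => (n : ℂ)⁻¹ • ∑ m ∈ Finset.range n, (lam k)⁻¹ ^ m • f ^ m
  have hnne : (n : ℂ) ≠ 0 := Nat.cast_ne_zero.mpr hn.ne'
  -- sum of projections is 1
  have hsum : ∑ k, P k = 1 := by
    show ∑ k, (n : ℂ)⁻¹ • ∑ m ∈ Finset.range n, (lam k)⁻¹ ^ m • f ^ m = 1
    rw [← Finset.smul_sum, Finset.sum_comm]
    have step : ∀ m ∈ Finset.range n,
        (∑ k : Fin n, (lam k)⁻¹ ^ m • f ^ m)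
          = (if m = 0 then ((n : ℂ) • f ^ m) else 0) := by
      intro m hm
      rw [← Finset.sum_smul]
      have h1 : ∑ k : Fin n, (lam k)⁻¹ ^ m = ∑ k ∈ Finset.range n, ((u ^ m)⁻¹) ^ k := by
        rw [← Fin.sum_univ_eq_sum_range]
        refine Finset.sum_congr rfl fun k _ => ?_
        show ((u ^ (k : ℕ))⁻¹) ^ m = ((u ^ m)⁻¹) ^ (k : ℕ)
        rw [← inv_pow, ← pow_mul, ← inv_pow, ← pow_mul, mul_comm]
      have h2 : ((u ^ m)⁻¹) ^ n = 1 := by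
        rw [inv_pow, ← pow_mul, mul_comm m n, pow_mul, hun, one_pow, inv_one]
      rw [h1, geom_aux _ h2]
      have h3 : (u ^ m)⁻¹ = 1 ↔ m = 0 := by
        rw [inv_eq_one]
        constructor
        · intro h
          exact Nat.eq_zero_of_dvd_of_lt ((hprim.pow_eq_one_iff_dvd m).mp h)
            (Finset.mem_range.mp hm)
        · intro h; rw [h, pow_zero]
      by_cases hm0 : m = 0
      · rw [if_pos (h3.mpr hm0), if_pos hm0]
      · rw [if_neg (fun hh => hm0 (h3.mp hh)), if_neg hm0, zero_smul]
    rw [Finset.sum_congr rfl step, Finset.sum_ite_eq' (Finset.range n) 0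
      (fun m => (n : ℂ) • f ^ m)]
    rw [if_pos (Finset.mem_range.mpr hn), pow_zero, smul_smul, inv_mul_cancel₀ hnne, one_smul]
  -- f * P k = lam k • P k
  have hfP : ∀ k, f * P k = lam k • P k := by
    intro k
    show f * ((n : ℂ)⁻¹ • ∑ m ∈ Finset.range n, (lam k)⁻¹ ^ m • f ^ m)
      = lam k • ((n : ℂ)⁻¹ • ∑ m ∈ Finset.range n, (lam k)⁻¹ ^ m • f ^ m)
    have key : ∀ m, f * ((lam k)⁻¹ ^ m • f ^ m)
        = lam k • ((lam k)⁻¹ ^ (m + 1) • f ^ (m + 1)) := by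
      intro m
      rw [pow_succ', pow_succ', smul_smul, ← mul_assoc, hlaminv k, one_mul, mul_smul_comm]
    rw [mul_smul_comm, Finset.mul_sum, smul_comm (lam k) ((n : ℂ)⁻¹)]
    congr 1
    rw [Finset.sum_congr rfl (fun m _ => key m), ← Finset.smul_sum]
    congr 1
    exact shift_aux (fun m => (lam k)⁻¹ ^ m • f ^ m)
      (by show (lam k)⁻¹ ^ n • f ^ n = (lam k)⁻¹ ^ 0 • f ^ 0
          rw [hlaminv_pow k, hfn, pow_zero, pow_zero, one_smul])
  -- f ^ m * P k = lam k ^ m • P k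
  have hfmP : ∀ k (m : ℕ), f ^ m * P k = lam k ^ m • P k := by
    intro k m
    induction m with
    | zero => rw [pow_zero, one_mul, pow_zero, one_smul]
    | succ m ih =>
      rw [pow_succ', mul_assoc, ih, mul_smul_comm, hfP k, smul_smul, ← pow_succ]
  -- orthogonal idempotents
  have hPP : ∀ j k, P j * P k = if j = k then P k else 0 := by
    intro j k
    have expand : P j * P k
        = ((n : ℂ)⁻¹ * ∑ m ∈ Finset.range n, ((lam j)⁻¹ * lam k) ^ m) • P k := by
      show ((n : ℂ)⁻¹ • ∑ m ∈ Finset.range n, (lam j)⁻¹ ^ m • f ^ m) * P k = _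
      rw [smul_mul_assoc, Finset.sum_mul]
      have key : ∀ m, ((lam j)⁻¹ ^ m • f ^ m) * P k = ((lam j)⁻¹ * lam k) ^ m • P k := by
        intro m
        rw [smul_mul_assoc, hfmP k m, smul_smul, mul_pow]
      rw [Finset.sum_congr rfl (fun m _ => key m), ← Finset.sum_smul, smul_smul]
    rw [expand]
    have hx : ((lam j)⁻¹ * lam k) ^ n = 1 := by
      rw [mul_pow, hlaminv_pow j, hlam_pow k, one_mul]
    rw [geom_aux _ hx]
    have hiff : ((lam j)⁻¹ * lam k = 1) ↔ j = k := by
      rw [inv_mul_eq_one₀ (hlam_ne j)]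
      constructor
      · intro h
        exact Fin.ext (hprim.pow_inj j.isLt k.isLt h)
      · intro h; rw [h]
    by_cases hjk : j = k
    · rw [if_pos (hiff.mpr hjk), if_pos hjk, inv_mul_cancel₀ hnne, one_smul]
    · rw [if_neg (fun hh => hjk (hiff.mp hh)), if_neg hjk, mul_zero, zero_smul]
  have hPidem : ∀ k, P k * P k = P k := fun k => by rw [hPP k k, if_pos rfl]
  have hPorth : ∀ j k, j ≠ k → P j * P k = 0 := fun j k h => by rw [hPP j k, if_neg h]
  set W : Fin n → Submodule ℂ V := fun k => LinearMap.range (P k) with hW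
  have hPW : ∀ k (v : V), v ∈ W k → P k v = v := by
    intro k v hv
    obtain ⟨w, hw⟩ := hv
    have := congrArg (fun (g : Module.End ℂ V) => g w) (hPidem k)
    simp only [Module.End.mul_apply] at this
    rw [← hw]; exact this
  have hPW0 : ∀ j k (v : V), j ≠ k → v ∈ W k → P j v = 0 := by
    intro j k v hjk hv
    obtain ⟨w, hw⟩ := hv
    have := congrArg (fun (g : Module.End ℂ V) => g w) (hPorth j k hjk)
    simp only [Module.End.mul_apply, LinearMap.zero_apply] at this
    rw [← hw]; exact this
  have htop : ⨆ k, W k = ⊤ := by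
    rw [eq_top_iff]
    intro v _
    have hv : v = ∑ k, P k v := by
      have := congrArg (fun (g : Module.End ℂ V) => g v) hsum
      simp only [LinearMap.coe_sum, Finset.sum_apply, Module.End.one_apply] at this
      exact this.symm
    have hmem : ∑ k, P k v ∈ ⨆ k, W k :=
      Submodule.sum_mem _ fun k _ => Submodule.mem_iSup_of_mem k ⟨v, rfl⟩
    rw [hv]; exact hmem
  have hindep : iSupIndep W := by
    rw [iSupIndep_def]
    intro k
    rw [Submodule.disjoint_def]
    intro x hxk hxsup
    have h0 : ∀ y : V, y ∈ (⨆ j, ⨆ (_ : j ≠ k), W j) → P k y = 0 := by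
      intro y hy
      rw [iSup_subtype'] at hy
      refine Submodule.iSup_induction' (fun (j : {j : Fin n // j ≠ k}) => W j.1)
        (motive := fun y _ => P k y = 0) ?_ (map_zero _) ?_ hy
      · intro i x hx
        exact hPW0 k i.1 x (Ne.symm i.2) hx
      · intro x y hx hy h1 h2
        rw [map_add, h1, h2, add_zero]
    have hx0 := h0 x hxsup
    rw [hPW k x hxk] at hx0
    exact hx0
  have hint : DirectSum.IsInternal W :=
    DirectSum.isInternal_submodule_of_iSupIndep_of_iSup_eq_top hindep htop
  let bW : (k : Fin n) → Module.Basis (Module.Free.ChooseBasisIndex ℂ (W k)) ℂ (W k) :=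
    fun k => Module.Free.chooseBasis ℂ (W k)
  let b := hint.collectedBasis bW
  have hb_mem : ∀ p, (b p : V) ∈ W p.1 := fun p => hint.collectedBasis_mem bW p
  have hfb : ∀ (m : ℕ) p, (f ^ m) (b p) = lam p.1 ^ m • b p := by
    intro m p
    obtain ⟨w, hw⟩ := hb_mem p
    have := congrArg (fun (g : Module.End ℂ V) => g w) (hfmP p.1 m)
    simp only [Module.End.mul_apply, LinearMap.smul_apply] at this
    rw [← hw]; exact this
  have hdiagm : ∀ m : ℕ, LinearMap.toMatrix b b (f ^ m)
      = Matrix.diagonal (fun p => lam p.1 ^ m) := by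
    intro m
    ext p q
    rw [LinearMap.toMatrix_apply, hfb m q, _root_.map_smul, Finsupp.smul_apply,
      Module.Basis.repr_self, Finsupp.single_apply, Matrix.diagonal_apply]
    by_cases h : p = q
    · subst h; rw [if_pos rfl, if_pos rfl, smul_eq_mul, mul_one]
    · rw [if_neg (Ne.symm h), if_neg h, smul_zero]
  have hAf : ∀ m : ℕ, (Matrix.toLinAlgEquiv' (A ^ m) : Module.End ℂ V) = f ^ m := by
    intro m; rw [map_pow]
  have hAE : ∀ (N : Matrix (Fin 4) (Fin 4) ℂ),
      (Matrix.toLinAlgEquiv' N : Module.End ℂ V) = Matrix.toLin' N := by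
    intro N
    apply LinearMap.ext
    intro v
    rw [Matrix.toLinAlgEquiv'_apply, Matrix.toLin'_apply]
  have htrace : ∀ m : ℕ, (A ^ m).trace
      = ∑ p : ((k : Fin n) × Module.Free.ChooseBasisIndex ℂ (W k)), lam p.1 ^ m := by
    intro m
    have h1 : LinearMap.trace ℂ V (f ^ m) = (A ^ m).trace := by
      rw [LinearMap.trace_eq_matrix_trace ℂ (Pi.basisFun ℂ (Fin 4)) (f ^ m),
        LinearMap.toMatrix_eq_toMatrix', ← hAf m, hAE, LinearMap.toMatrix'_toLin']
    have h2 : LinearMap.trace ℂ V (f ^ m)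
        = ∑ p : ((k : Fin n) × Module.Free.ChooseBasisIndex ℂ (W k)), lam p.1 ^ m := by
      rw [LinearMap.trace_eq_matrix_trace ℂ b (f ^ m), hdiagm m, Matrix.trace_diagonal]
    rw [← h1, h2]
  have hdet : A.det = ∏ p : ((k : Fin n) × Module.Free.ChooseBasisIndex ℂ (W k)), lam p.1 := by
    have h1 : LinearMap.det f = A.det := by
      have : f = Matrix.toLin' A := hAE A
      rw [← LinearMap.det_toMatrix' f, this, LinearMap.toMatrix'_toLin']
    have h2 : LinearMap.det f
        = ∏ p : ((k : Fin n) × Module.Free.ChooseBasisIndex ℂ (W k)), lam p.1 := by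
      rw [← LinearMap.det_toMatrix b f, ← pow_one f, hdiagm 1, Matrix.det_diagonal]
      exact Finset.prod_congr rfl fun p _ => pow_one _
    rw [← h1, h2]
  have hcard : Fintype.card ((k : Fin n) × Module.Free.ChooseBasisIndex ℂ (W k)) = 4 := by
    rw [← Module.finrank_eq_card_basis b]
    exact Module.finrank_fin_fun ℂ
  let e := Fintype.equivFinOfCardEq hcard
  refine ⟨fun i => lam ((e.symm i).1), fun i => hlam_pow _, fun m => ?_, ?_⟩
  · rw [htrace m]
    exact (Equiv.sum_comp e.symm fun p => lam p.1 ^ m).symm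
  · rw [hdet]
    exact (Equiv.prod_comp e.symm fun p => lam p.1).symm


open Matrix

private lemma quad_aux (d : Fin 4 → ℂ) (h0 : ∀ i, d i ≠ 0) (hp : ∏ i, d i = 1) :
    (∑ i, (d i)⁻¹) ^ 2 - ∑ i, ((d i)⁻¹) ^ 2 = (∑ i, d i) ^ 2 - ∑ i, (d i) ^ 2 := by
  rw [Fin.prod_univ_four] at hp
  rw [Fin.sum_univ_four, Fin.sum_univ_four, Fin.sum_univ_four, Fin.sum_univ_four]
  have h0' : d 0 ≠ 0 := h0 0
  have h1' : d 1 ≠ 0 := h0 1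
  have h2' : d 2 ≠ 0 := h0 2
  have h3' : d 3 ≠ 0 := h0 3
  have e0 : (d 0)⁻¹ = d 1 * d 2 * d 3 := by field_simp; linear_combination -hp
  have e1 : (d 1)⁻¹ = d 0 * d 2 * d 3 := by field_simp; linear_combination -hp
  have e2 : (d 2)⁻¹ = d 0 * d 1 * d 3 := by field_simp; linear_combination -hp
  have e3 : (d 3)⁻¹ = d 0 * d 1 * d 2 := by field_simp; linear_combination -hp
  rw [e0, e1, e2, e3]
  linear_combination (2 * (d 0 * d 1 + d 0 * d 2 + d 0 * d 3 + d 1 * d 2 + d 1 * d 3 + d 2 * d 3)) * hp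

private lemma sl4_diag (Γ : Subgroup (Matrix.SpecialLinearGroup (Fin 4) ℂ)) [Fintype Γ]
    (g : Γ) :
    ∃ d : Fin 4 → ℂ, (∀ i, d i ≠ 0) ∧ (∏ i, d i = 1) ∧
      (∀ i, (starRingEnd ℂ) (d i) = (d i)⁻¹) ∧
      (∀ m : ℕ, Matrix.trace (((g ^ m : Γ) : Matrix.SpecialLinearGroup (Fin 4) ℂ) :
        Matrix (Fin 4) (Fin 4) ℂ) = ∑ i, d i ^ m) ∧
      (∀ m : ℕ, Matrix.trace (((g⁻¹ ^ m : Γ) : Matrix.SpecialLinearGroup (Fin 4) ℂ) :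
        Matrix (Fin 4) (Fin 4) ℂ) = ∑ i, ((d i)⁻¹) ^ m) := by
  set n := Fintype.card Γ with hn
  have hnpos : 0 < n := Fintype.card_pos
  set A : Matrix (Fin 4) (Fin 4) ℂ := ((g : Matrix.SpecialLinearGroup (Fin 4) ℂ) :
    Matrix (Fin 4) (Fin 4) ℂ) with hA
  have hcoe : ∀ m : ℕ, (((g ^ m : Γ) : Matrix.SpecialLinearGroup (Fin 4) ℂ) :
      Matrix (Fin 4) (Fin 4) ℂ) = A ^ m := by
    intro m
    rw [SubgroupClass.coe_pow, Matrix.SpecialLinearGroup.coe_pow]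
  have hApow : A ^ n = 1 := by
    rw [← hcoe n, pow_card_eq_one]
    rfl
  obtain ⟨d, hd1, hd2, hd3⟩ := exists_diag hnpos A hApow
  have hdne : ∀ i, d i ≠ 0 := by
    intro i h
    have := hd1 i
    rw [h, zero_pow hnpos.ne'] at this
    exact one_ne_zero this.symm
  have hdinv : ∀ i, d i ^ (n - 1) = (d i)⁻¹ := by
    intro i
    have h1 : d i * d i ^ (n - 1) = 1 := by
      rw [← pow_succ']
      have : n - 1 + 1 = n := Nat.sub_add_cancel hnpos
      rw [this, hd1 i]
    exact (inv_eq_of_mul_eq_one_right h1).symm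
  have hdet : ∏ i, d i = 1 := by rw [← hd3, hA, Matrix.SpecialLinearGroup.det_coe]
  have hginv : g⁻¹ = g ^ (n - 1) := by
    apply inv_eq_of_mul_eq_one_right
    rw [← pow_succ', Nat.sub_add_cancel hnpos, pow_card_eq_one]
  refine ⟨d, hdne, hdet, ?_, fun m => by rw [hcoe m]; exact hd2 m, ?_⟩
  · intro i
    have hnorm : ‖d i‖ = 1 := Complex.norm_eq_one_of_pow_eq_one (hd1 i) hnpos.ne'
    exact (Complex.inv_eq_conj hnorm).symm
  · intro m
    rw [hginv, ← pow_mul, hcoe ((n - 1) * m)]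
    rw [hd2 ((n - 1) * m)]
    refine Finset.sum_congr rfl fun i _ => ?_
    rw [pow_mul, hdinv i]

/-- For a finite subgroup `Γ ⊂ SL₄ℂ` with natural representation of character
`χγ`, the diagonal entries of `T⁻¹ A1 T`, `T⁻¹ A2 T`, `T⁻¹ A3 T` (where `T` is the character
table) are respectively `conj (χγ (g_j)) = χγ (g_j⁻¹)`, `(χγ(g_j)² − χγ(g_j²))/2`, and
`χγ (g_j)`. -/
theorem character_table_diagonal_entries {l : ℕ}
    (Γ : Subgroup (Matrix.SpecialLinearGroup (Fin 4) ℂ)) [Fintype Γ]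
    (χ : Fin (l + 1) → Γ → ℂ) (χγ χ2 : Γ → ℂ)
    (hχγ : ∀ g : Γ, χγ g = Matrix.trace ((g : Matrix.SpecialLinearGroup (Fin 4) ℂ) :
      Matrix (Fin 4) (Fin 4) ℂ))
    (horth : ∀ i i', ∑ g : Γ, (starRingEnd ℂ) (χ i g) * χ i' g =
      if i = i' then (Fintype.card Γ : ℂ) else 0)
    (hconj : ∀ i g, (starRingEnd ℂ) (χ i g) = χ i g⁻¹)
    (hclass : ∀ i (a b : Γ), IsConj a b → χ i a = χ i b)
    (hχ2 : ∀ g, χ2 g = ((χγ g) ^ 2 - χγ (g ^ 2)) / 2)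
    (gr : Fin (l + 1) → Γ)
    (hrep : ∀ x : Γ, ∃! j, IsConj (gr j) x)
    (A1 A2 A3 : Matrix (Fin (l + 1)) (Fin (l + 1)) ℕ)
    (hA1 : ∀ j g, χγ g * χ j g = ∑ i, (A1 i j : ℂ) * χ i g)
    (hA2 : ∀ j g, χ2 g * χ j g = ∑ i, (A2 i j : ℂ) * χ i g)
    (hA3 : ∀ j g, χγ g⁻¹ * χ j g = ∑ i, (A3 i j : ℂ) * χ i g)
    (T : Matrix (Fin (l + 1)) (Fin (l + 1)) ℂ)
    (hT : ∀ i j, T i j = χ i (gr j)) :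
    ∀ j, (T⁻¹ * A1.map (Nat.cast : ℕ → ℂ) * T) j j = (starRingEnd ℂ) (χγ (gr j)) ∧
      (T⁻¹ * A2.map (Nat.cast : ℕ → ℂ) * T) j j = ((χγ (gr j)) ^ 2 - χγ (gr j ^ 2)) / 2 ∧
      (T⁻¹ * A3.map (Nat.cast : ℕ → ℂ) * T) j j = χγ (gr j) := by
  classical
  intro j
  set N : ℂ := (Fintype.card Γ : ℂ) with hN
  have hNne : N ≠ 0 := Nat.cast_ne_zero.mpr Fintype.card_ne_zero
  set w : Fin (l + 1) → ℕ :=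
    fun k => (Finset.univ.filter (fun g : Γ => IsConj (gr k) g)).card with hw
  set ι : Γ → Fin (l + 1) := fun x => (hrep x).choose with hι_def
  have hι : ∀ x, IsConj (gr (ι x)) x := fun x => (hrep x).choose_spec.1
  have hι' : ∀ x k, IsConj (gr k) x → ι x = k :=
    fun x k h => ((hrep x).choose_spec.2 k h).symm
  have hfilter : ∀ k, Finset.univ.filter (fun x : Γ => ι x = k)
      = Finset.univ.filter (fun x : Γ => IsConj (gr k) x) := by
    intro k
    ext x
    simp only [Finset.mem_filter, Finset.mem_univ, true_and]
    exact ⟨fun h => h ▸ hι x, fun h => hι' x k h⟩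
  have hclasssum : ∀ F : Γ → ℂ, (∀ k x, IsConj (gr k) x → F x = F (gr k)) →
      ∑ x : Γ, F x = ∑ k, (w k : ℂ) * F (gr k) := by
    intro F hF
    rw [← Finset.sum_fiberwise Finset.univ ι F]
    refine Finset.sum_congr rfl fun k _ => ?_
    rw [hfilter k, Finset.sum_congr rfl (fun x hx => hF k x (Finset.mem_filter.mp hx).2),
      Finset.sum_const, nsmul_eq_mul]
  set B : Matrix (Fin (l + 1)) (Fin (l + 1)) ℂ :=
    Matrix.of (fun k i => N⁻¹ * (w k : ℂ) * (starRingEnd ℂ) (T i k)) with hB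
  have hBa : ∀ k i, B k i = N⁻¹ * (w k : ℂ) * (starRingEnd ℂ) (T i k) := fun k i => rfl
  have hTB : T * B = 1 := by
    ext i i'
    rw [Matrix.mul_apply, Matrix.one_apply]
    calc ∑ k, T i k * B k i'
        = N⁻¹ * ∑ k, (w k : ℂ) * (χ i (gr k) * (starRingEnd ℂ) (χ i' (gr k))) := by
          rw [Finset.mul_sum]
          refine Finset.sum_congr rfl fun k _ => ?_
          rw [hBa, hT, hT]
          ring
      _ = N⁻¹ * ∑ x : Γ, χ i x * (starRingEnd ℂ) (χ i' x) := by
          rw [hclasssum (fun x => χ i x * (starRingEnd ℂ) (χ i' x))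
            (fun k x h => by rw [hclass i _ _ h, hclass i' _ _ h])]
      _ = N⁻¹ * (starRingEnd ℂ) (∑ x : Γ, (starRingEnd ℂ) (χ i x) * χ i' x) := by
          rw [map_sum]
          congr 1
          refine Finset.sum_congr rfl fun x _ => ?_
          rw [_root_.map_mul, Complex.conj_conj, mul_comm]
      _ = if i = i' then 1 else 0 := by
          rw [horth i i']
          split_ifs with h
          · rw [hN, map_natCast, inv_mul_cancel₀ (Nat.cast_ne_zero.mpr (Fintype.card_ne_zero (α := Γ)))]
          · rw [map_zero, mul_zero]
  have hBT : B * T = 1 := mul_eq_one_comm.mp hTB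
  have hTinv : T⁻¹ = B := Matrix.inv_eq_right_inv hTB
  have key1 : N⁻¹ * (w j : ℂ) * ∑ i, (starRingEnd ℂ) (χ i (gr j)) * χ i (gr j) = 1 := by
    have h := congrFun (congrFun hBT j) j
    rw [Matrix.one_apply_eq] at h
    rw [← h, Matrix.mul_apply, Finset.mul_sum]
    refine Finset.sum_congr rfl fun i _ => ?_
    rw [hBa, hT]
    ring
  have main : ∀ (Amat : Matrix (Fin (l + 1)) (Fin (l + 1)) ℕ) (dfun : Γ → ℂ),
      (∀ k (g : Γ), dfun g * χ k g = ∑ i, (Amat i k : ℂ) * χ i g) →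
      (T⁻¹ * Amat.map (Nat.cast : ℕ → ℂ) * T) j j = dfun ((gr j)⁻¹) := by
    intro Amat dfun hAm
    rw [hTinv]
    calc (B * Amat.map (Nat.cast : ℕ → ℂ) * T) j j
        = ∑ k, (∑ i, B j i * ((Amat i k : ℕ) : ℂ)) * T k j := by
          rw [Matrix.mul_apply]
          refine Finset.sum_congr rfl fun k _ => ?_
          rw [Matrix.mul_apply]
          rfl
      _ = ∑ k, ((N⁻¹ * (w j : ℂ)) * (dfun ((gr j)⁻¹) * χ k ((gr j)⁻¹))) * χ k (gr j) := by
          refine Finset.sum_congr rfl fun k _ => ?_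
          rw [hT]
          congr 1
          have step : ∀ i, B j i * ((Amat i k : ℕ) : ℂ)
              = (N⁻¹ * (w j : ℂ)) * ((Amat i k : ℂ) * χ i ((gr j)⁻¹)) := by
            intro i
            rw [hBa, hT, hconj]
            ring
          rw [Finset.sum_congr rfl (fun i _ => step i), ← Finset.mul_sum, ← hAm k ((gr j)⁻¹)]
      _ = dfun ((gr j)⁻¹) * (N⁻¹ * (w j : ℂ)
            * ∑ k, (starRingEnd ℂ) (χ k (gr j)) * χ k (gr j)) := by
          rw [Finset.mul_sum, Finset.mul_sum]
          refine Finset.sum_congr rfl fun k _ => ?_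
          rw [hconj]
          ring
      _ = dfun ((gr j)⁻¹) := by rw [key1, mul_one]
  obtain ⟨d, hdne, hdprod, hdconj, htr, htrinv⟩ := sl4_diag Γ (gr j)
  have t1 : χγ (gr j) = ∑ i, d i := by
    rw [hχγ]
    have h := htr 1
    simp only [pow_one] at h
    exact h
  have t2 : χγ ((gr j)⁻¹) = ∑ i, (d i)⁻¹ := by
    rw [hχγ]
    have h := htrinv 1
    simp only [pow_one] at h
    exact h
  have t3 : χγ ((gr j)⁻¹ ^ 2) = ∑ i, ((d i)⁻¹) ^ 2 := by rw [hχγ]; exact htrinv 2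
  have t4 : χγ (gr j ^ 2) = ∑ i, (d i) ^ 2 := by rw [hχγ]; exact htr 2
  refine ⟨?_, ?_, ?_⟩
  · rw [main A1 χγ hA1, t1, t2, map_sum]
    exact Finset.sum_congr rfl fun i _ => (hdconj i).symm
  · rw [main A2 χ2 hA2, hχ2, t1, t2, t3, t4, quad_aux d hdne hdprod]
  · rw [main A3 (fun g => χγ g⁻¹) hA3, inv_inv]
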